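/- Let G be a (pan, even hole)-free graph, B an ℓ-buoy in G (ℓ ≥ 5), and a, b two vertices in the same bag B_i. If a strictly dominates b with respect to B_{i+1} (i.e., the neighbors of b in B_{i+1} form a proper subset of the neighbors of a in B_{i+1}), then b dominates a with respect to B_{i-1} (every neighbor of a in B_{i-1} is a neighbor of b). -/

import Mathlib

def IsHole {V : Type*} (G : SimpleGraph V) (n : ℕ) (f : ZMod n → V) : Prop :=
  4 ≤ n ∧ Function.Injective f ∧
    ∀ i j : ZMod n, G.Adj (f i) (f j) ↔ (j = i + 1 ∨ i = j + 1)

def HasInducedPan {V : Type*} (G : SimpleGraph V) : Prop :=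
  ∃ (n : ℕ) (f : ZMod n → V) (x : V),
    IsHole G n f ∧ x ∉ Set.range f ∧ ∃! i : ZMod n, G.Adj x (f i)

def HasEvenHole {V : Type*} (G : SimpleGraph V) : Prop :=
  ∃ (n : ℕ) (f : ZMod n → V), IsHole G n f ∧ Even n

def IsBuoy {V : Type*} (G : SimpleGraph V) (ℓ : ℕ) (B : ZMod ℓ → Set V) : Prop :=
  5 ≤ ℓ ∧
  (∀ i, (B i).Nonempty) ∧
  (∀ i, G.IsClique (B i)) ∧
  (Pairwise fun i j => Disjoint (B i) (B j)) ∧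
  (∀ i, ∀ v ∈ B i, ∃ u ∈ B (i + 1), G.Adj v u) ∧
  (∀ i, ∀ v ∈ B i, ∃ u ∈ B (i - 1), G.Adj v u) ∧
  (∀ i j : ZMod ℓ, j ≠ i → j ≠ i + 1 → j ≠ i - 1 →
    ∀ v ∈ B i, ∀ u ∈ B j, ¬ G.Adj v u)

lemma isHole_of_nat {V : Type*} (G : SimpleGraph V) (n : ℕ) (hn : 4 ≤ n) (g : ℕ → V)
    (hinj : ∀ p q, p < n → q < n → g p = g q → p = q)
    (hadj : ∀ p, p + 1 < n → G.Adj (g p) (g (p + 1)))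
    (hwrap : G.Adj (g (n - 1)) (g 0))
    (hnon : ∀ p q, p < n → q < n → p + 2 ≤ q → ¬(p = 0 ∧ q = n - 1) →
      ¬ G.Adj (g p) (g q)) :
    IsHole G n (fun j => g j.val) := by
  haveI : NeZero n := ⟨by omega⟩
  haveI : Fact (1 < n) := ⟨by omega⟩
  have hval1 : ∀ j : ZMod n, (j + 1).val = (j.val + 1) % n := by
    intro j
    rw [ZMod.val_add, ZMod.val_one]
  have hvlt : ∀ j : ZMod n, j.val < n := fun j => ZMod.val_lt j
  have hveq : ∀ j k : ZMod n, j = k ↔ j.val = k.val := by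
    intro j k
    constructor
    · rintro rfl; rfl
    · exact fun h => ZMod.val_injective n h
  have key : ∀ p q, p < n → q < n →
      (G.Adj (g p) (g q) ↔ (q = (p + 1) % n ∨ p = (q + 1) % n)) := by
    intro p q hp hq
    constructor
    · intro hA
      by_contra hcon
      push_neg at hcon
      obtain ⟨h1, h2⟩ := hcon
      rcases Nat.lt_trichotomy p q with hlt | heq | hgt
      · have hq1 : q ≠ p + 1 := by
          intro h
          exact h1 (by rw [Nat.mod_eq_of_lt (by omega)]; omega)
        have : p + 2 ≤ q := by omega
        have hne : ¬(p = 0 ∧ q = n - 1) := by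
          rintro ⟨rfl, rfl⟩
          apply h2
          have : n - 1 + 1 = n := by omega
          rw [this, Nat.mod_self]
        exact hnon p q hp hq this hne hA
      · subst heq; exact G.irrefl hA
      · have hp1 : p ≠ q + 1 := by
          intro h
          exact h2 (by rw [Nat.mod_eq_of_lt (by omega)]; omega)
        have : q + 2 ≤ p := by omega
        have hne : ¬(q = 0 ∧ p = n - 1) := by
          rintro ⟨rfl, rfl⟩
          apply h1
          have : n - 1 + 1 = n := by omega
          rw [this, Nat.mod_self]
        exact hnon q p hq hp this hne hA.symm
    · rintro (rfl | rfl)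
      · rcases Nat.lt_or_ge (p + 1) n with h | h
        · rw [Nat.mod_eq_of_lt h]; exact hadj p h
        · have hpn : p = n - 1 := by omega
          have hpe : p + 1 = n := by omega
          rw [hpe, Nat.mod_self, hpn]; exact hwrap
      · rcases Nat.lt_or_ge (q + 1) n with h | h
        · rw [Nat.mod_eq_of_lt h]; exact (hadj q h).symm
        · have hqn : q = n - 1 := by omega
          have hqe : q + 1 = n := by omega
          rw [hqe, Nat.mod_self, hqn]; exact hwrap.symm
  refine ⟨hn, ?_, ?_⟩
  · intro j k h
    exact ZMod.val_injective n (hinj j.val k.val (hvlt j) (hvlt k) h)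
  · intro j k
    rw [key j.val k.val (hvlt j) (hvlt k), hveq k (j + 1), hveq j (k + 1), hval1, hval1]

theorem stmt_8 {V : Type*} (G : SimpleGraph V)
    (hpan : ¬ HasInducedPan G) (heven : ¬ HasEvenHole G)
    (ℓ : ℕ) (B : ZMod ℓ → Set V) (hB : IsBuoy G ℓ B)
    (i : ZMod ℓ) (a b : V) (ha : a ∈ B i) (hb : b ∈ B i)
    (hdom : {z ∈ B (i + 1) | G.Adj b z} ⊂ {z ∈ B (i + 1) | G.Adj a z}) :
    ∀ z ∈ B (i - 1), G.Adj a z → G.Adj b z := by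
  obtain ⟨hl5, hne, hclique, hdisj, hfwd, hbwd, hnoedge⟩ := hB
  intro z hz haz
  by_contra hbz
  haveI : NeZero ℓ := ⟨by omega⟩
  -- basic cast facts
  have hcast : ∀ p q : ℕ, p < ℓ → q < ℓ → ((p : ZMod ℓ) = (q : ZMod ℓ)) → p = q := by
    intro p q hp hq h
    have h2 := congrArg ZMod.val h
    rwa [ZMod.val_cast_of_lt hp, ZMod.val_cast_of_lt hq] at h2
  -- vertices in bags with distinct offsets are distinct
  have hmne : ∀ (c d : ℕ) (v w : V), c < ℓ → d < ℓ →
      v ∈ B (i + (c : ℕ)) → w ∈ B (i + (d : ℕ)) → c ≠ d → v ≠ w := by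
    intro c d v w hc hd hv hw hcd hvw
    subst hvw
    have hij : (i + (c : ℕ) : ZMod ℓ) ≠ i + (d : ℕ) := by
      intro h
      exact hcd (hcast c d hc hd (by linear_combination h))
    exact (Set.disjoint_left.mp (hdisj hij) hv) hw
  -- master nonadjacency
  have hmaster : ∀ (c d : ℕ) (v w : V), c < ℓ → d < ℓ →
      v ∈ B (i + (c : ℕ)) → w ∈ B (i + (d : ℕ)) →
      d ≠ c → d ≠ (c + 1) % ℓ → c ≠ (d + 1) % ℓ → ¬ G.Adj v w := by
    intro c d v w hc hd hv hw h1 h2 h3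
    apply hnoedge (i + (c : ℕ)) (i + (d : ℕ))
    · intro h
      exact h1 (hcast d c hd hc (by linear_combination h))
    · intro h
      apply h2
      apply hcast d ((c + 1) % ℓ) hd (Nat.mod_lt _ (by omega))
      have hmod : (((c + 1) % ℓ : ℕ) : ZMod ℓ) = (c : ZMod ℓ) + 1 := by
        rw [ZMod.natCast_mod]; push_cast; ring
      rw [hmod]; linear_combination h
    · intro h
      apply h3
      apply hcast c ((d + 1) % ℓ) hc (Nat.mod_lt _ (by omega))
      have hmod : (((d + 1) % ℓ : ℕ) : ZMod ℓ) = (d : ZMod ℓ) + 1 := by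
        rw [ZMod.natCast_mod]; push_cast; ring
      rw [hmod]; linear_combination -h
    · exact hv
    · exact hw
  -- uniform-offset holes
  have hole_of_bags : ∀ g : ℕ → V, (∀ m, m < ℓ → g m ∈ B (i + (m : ℕ))) →
      (∀ m, m + 1 < ℓ → G.Adj (g m) (g (m + 1))) → G.Adj (g (ℓ - 1)) (g 0) →
      IsHole G ℓ (fun j => g j.val) := by
    intro g hmem hadj hwrap
    apply isHole_of_nat G ℓ (by omega) g
    · intro p q hp hq hgpq
      by_contra h
      exact hmne p q (g p) (g q) hp hq (hmem p hp) (hmem q hq) h hgpq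
    · exact hadj
    · exact hwrap
    · intro p q hp hq hpq hne2
      apply hmaster p q (g p) (g q) hp hq (hmem p hp) (hmem q hq)
      · omega
      · rw [Nat.mod_eq_of_lt (by omega)]; omega
      · have hp0 : ¬(p = 0 ∧ q = ℓ - 1) := hne2
        rcases Nat.lt_or_ge (q + 1) ℓ with h | h
        · rw [Nat.mod_eq_of_lt h]; omega
        · rw [show q + 1 = ℓ by omega, Nat.mod_self]
          intro h2
          exact hp0 ⟨h2.symm ▸ rfl, by omega⟩
  -- extract x
  obtain ⟨x, hxmem, hxns⟩ := Set.exists_of_ssubset hdom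
  obtain ⟨hxB, hax⟩ := hxmem
  have hbx : ¬ G.Adj b x := fun h => hxns ⟨hxB, h⟩
  have hsubdom : ∀ t, t ∈ B (i + 1) → G.Adj b t → G.Adj a t := by
    intro t ht hbt
    exact (hdom.1 ⟨ht, hbt⟩).2
  have hab_ne : a ≠ b := by rintro rfl; exact hbx hax
  have hab : G.Adj a b := (hclique i) ha hb hab_ne
  -- the chain u going backwards from z
  have hbwd' : ∀ (j : ZMod ℓ), ∀ v ∈ B j, ∃ w, w ∈ B (j - 1) ∧ G.Adj v w := by
    intro j v hv
    obtain ⟨w, hw, h⟩ := hbwd j v hv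
    exact ⟨w, hw, h⟩
  let U : ∀ _ : ℕ, {w : V // w ∈ B (i - 1 - (_ : ℕ))} := fun k =>
    Nat.rec (motive := fun k => {w : V // w ∈ B (i - 1 - (k : ℕ))})
      ⟨z, by simpa using hz⟩
      (fun k ih => ⟨(hbwd' _ ih.1 ih.2).choose, by
        have h := (hbwd' _ ih.1 ih.2).choose_spec.1
        have e : i - 1 - ((k.succ : ℕ) : ZMod ℓ) = (i - 1 - ((k : ℕ) : ZMod ℓ)) - 1 := by
          push_cast; ring
        rw [e]; exact h⟩) k
  let u : ℕ → V := fun k => (U k).1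
  have hu0 : u 0 = z := rfl
  have huB : ∀ k : ℕ, u k ∈ B (i - 1 - (k : ℕ)) := fun k => (U k).2
  have hua : ∀ k : ℕ, G.Adj (u k) (u (k + 1)) :=
    fun k => (hbwd' _ (U k).1 (U k).2).choose_spec.2
  -- offset versions of bag memberships
  have huoff : ∀ m : ℕ, m ≤ ℓ - 3 → u (ℓ - 3 - m) ∈ B (i + ((m + 2 : ℕ) : ZMod ℓ)) := by
    intro m hm
    have h := huB (ℓ - 3 - m)
    have e : i - 1 - ((ℓ - 3 - m : ℕ) : ZMod ℓ) = i + ((m + 2 : ℕ) : ZMod ℓ) := by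
      rw [show (ℓ - 3 - m : ℕ) = ℓ - (3 + m) by omega, Nat.cast_sub (by omega),
        ZMod.natCast_self]
      push_cast; ring
    rwa [e] at h
  have hoff_im1 : (i : ZMod ℓ) - 1 = i + ((ℓ - 1 : ℕ) : ZMod ℓ) := by
    rw [Nat.cast_sub (by omega), ZMod.natCast_self]
    push_cast; ring
  have hoff_i1 : (i : ZMod ℓ) + 1 = i + ((1 : ℕ) : ZMod ℓ) := by push_cast; ring
  have hoff_i2 : (i : ZMod ℓ) + 2 = i + ((2 : ℕ) : ZMod ℓ) := by push_cast; ring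
  have haoff : a ∈ B (i + ((0 : ℕ) : ZMod ℓ)) := by simpa using ha
  have hboff : b ∈ B (i + ((0 : ℕ) : ZMod ℓ)) := by simpa using hb
  have hxoff : x ∈ B (i + ((1 : ℕ) : ZMod ℓ)) := by rwa [hoff_i1] at hxB
  have hzoff : z ∈ B (i + ((ℓ - 1 : ℕ) : ZMod ℓ)) := by rwa [hoff_im1] at hz
  -- T, s, w
  have hTB : u (ℓ - 3) ∈ B (i + 2) := by
    have h := huoff 0 (by omega)
    rw [show ℓ - 3 - 0 = ℓ - 3 by omega] at h
    rwa [hoff_i2]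
  obtain ⟨s, hsB0, hTs⟩ := hbwd' (i + 2) (u (ℓ - 3)) hTB
  have hsB : s ∈ B (i + 1) := by rwa [show (i : ZMod ℓ) + 2 - 1 = i + 1 by ring] at hsB0
  have hsoff : s ∈ B (i + ((1 : ℕ) : ZMod ℓ)) := by rwa [hoff_i1] at hsB
  obtain ⟨w, hwB, hbw⟩ := hbwd' i b hb
  have hwoff : w ∈ B (i + ((ℓ - 1 : ℕ) : ZMod ℓ)) := by rwa [hoff_im1] at hwB
  have hwz_ne : w ≠ z := by rintro rfl; exact hbz hbw
  have hwz : G.Adj w z := (hclique (i - 1)) hwB hz hwz_ne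
  -- the standard ℓ-hole through a, t ∈ B_{i+1}, the chain, z
  have mkhole1 : ∀ t : V, t ∈ B (i + ((1 : ℕ) : ZMod ℓ)) → G.Adj a t →
      G.Adj (u (ℓ - 3)) t →
      IsHole G ℓ (fun j : ZMod ℓ =>
        (fun m => match m with | 0 => a | 1 => t | (m + 2) => u (ℓ - 3 - m)) j.val) := by
    intro t htoff hat hTt
    refine hole_of_bags (fun m => match m with | 0 => a | 1 => t | (m + 2) => u (ℓ - 3 - m))
      ?_ ?_ ?_
    · intro m hm
      match m with
      | 0 => exact haoff
      | 1 => exact htoff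
      | (m + 2) => exact huoff m (by omega)
    · intro m hm
      match m with
      | 0 => exact hat
      | 1 =>
        show G.Adj t (u (ℓ - 3 - 0))
        rw [Nat.sub_zero]
        exact hTt.symm
      | (m + 2) =>
        show G.Adj (u (ℓ - 3 - m)) (u (ℓ - 3 - (m + 1)))
        rw [show ℓ - 3 - m = (ℓ - 3 - (m + 1)) + 1 by omega]
        exact (hua (ℓ - 3 - (m + 1))).symm
    · have e : ℓ - 1 = (ℓ - 3) + 2 := by omega
      rw [e]
      show G.Adj (u (ℓ - 3 - (ℓ - 3))) a
      rw [Nat.sub_self, hu0]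
      exact haz.symm
  -- pan with cone vertex b over the standard hole
  have panb : ∀ t : V, t ∈ B (i + ((1 : ℕ) : ZMod ℓ)) → G.Adj a t →
      G.Adj (u (ℓ - 3)) t → ¬ G.Adj b t → False := by
    intro t htoff hat hTt hbt
    apply hpan
    refine ⟨ℓ, _, b, mkhole1 t htoff hat hTt, ?_, ?_⟩
    · rintro ⟨j, hj⟩
      have hjv : j.val < ℓ := ZMod.val_lt j
      have hj' : (fun m => match m with | 0 => a | 1 => t | (m + 2) => u (ℓ - 3 - m)) j.val
          = b := hj
      generalize hg : j.val = m at hj' hjv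
      match m with
      | 0 => exact hab_ne hj'
      | 1 => exact hmne 1 0 t b (by omega) (by omega) htoff hboff (by omega) hj'
      | (m + 2) =>
        exact hmne (m + 2) 0 (u (ℓ - 3 - m)) b (by omega) (by omega)
          (huoff m (by omega)) hboff (by omega) hj'
    · refine ⟨0, ?_, ?_⟩
      · show G.Adj b ((fun m => match m with | 0 => a | 1 => t | (m + 2) => u (ℓ - 3 - m))
          (0 : ZMod ℓ).val)
        rw [ZMod.val_zero]
        exact hab.symm
      · intro j hj
        have hjv : j.val < ℓ := ZMod.val_lt j
        have hj' : G.Adj b ((fun m => match m with | 0 => a | 1 => t | (m + 2) => u (ℓ - 3 - m))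
          j.val) := hj
        have hj0 : j.val = 0 := by
          generalize hg : j.val = m at hj' hjv
          match m with
          | 0 => rfl
          | 1 => exact absurd hj' hbt
          | (m + 2) =>
            exfalso
            by_cases hmz : m = ℓ - 3
            · apply hbz
              have hj2 : G.Adj b (u (ℓ - 3 - m)) := hj'
              rw [hmz, Nat.sub_self, hu0] at hj2
              exact hj2
            · exact hmaster 0 (m + 2) b (u (ℓ - 3 - m)) (by omega) (by omega)
                hboff (huoff m (by omega)) (by omega)
                (by rw [Nat.mod_eq_of_lt (by omega)]; omega)
                (by rw [Nat.mod_eq_of_lt (by omega)]; omega) hj'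
        exact (ZMod.val_eq_zero j).mp hj0
  -- helper for mod inequalities
  have hmodne : ∀ c d : ℕ, d ≤ ℓ → c < d → 0 < c → c ≠ d % ℓ := by
    intro c d h1 h2 h3
    rcases Nat.lt_or_ge d ℓ with h | h
    · rw [Nat.mod_eq_of_lt h]; omega
    · rw [show d = ℓ by omega, Nat.mod_self]; omega
  -- Case 2: x is adjacent to T
  by_cases hxT : G.Adj (u (ℓ - 3)) x
  · exact panb x hxoff hax hxT hbx
  by_cases has : G.Adj a s
  case neg =>
    -- Case 3a : a not adjacent to s; hole a,x,s,T,...,z of length ℓ+1, pan from b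
    have hbs : ¬ G.Adj b s := fun h => has (hsubdom s hsB h)
    have hxs_ne : x ≠ s := by rintro rfl; exact has hax
    have hxs : G.Adj x s := (hclique (i + 1)) hxB hsB hxs_ne
    have hole3 : IsHole G (ℓ + 1) (fun j : ZMod (ℓ + 1) =>
        (fun m => match m with
          | 0 => a | 1 => x | 2 => s | (m + 3) => u (ℓ - 3 - m)) j.val) := by
      apply isHole_of_nat G (ℓ + 1) (by omega)
        (fun m => match m with | 0 => a | 1 => x | 2 => s | (m + 3) => u (ℓ - 3 - m))
      · -- injectivity
        have aux : ∀ p q, p < ℓ + 1 → q < ℓ + 1 → p < q →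
            (fun m => match m with
              | 0 => a | 1 => x | 2 => s | (m + 3) => u (ℓ - 3 - m)) p ≠
            (fun m => match m with
              | 0 => a | 1 => x | 2 => s | (m + 3) => u (ℓ - 3 - m)) q := by
          intro p q hp hq hlt
          rcases p with _ | _ | _ | p <;> rcases q with _ | _ | _ | q <;> try omega
          · exact hmne 0 1 a x (by omega) (by omega) haoff hxoff (by omega)
          · exact hmne 0 1 a s (by omega) (by omega) haoff hsoff (by omega)
          · exact hmne 0 (q + 2) a (u (ℓ - 3 - q)) (by omega) (by omega) haoff
              (huoff q (by omega)) (by omega)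
          · exact hmne 1 (q + 2) x (u (ℓ - 3 - q)) (by omega) (by omega) hxoff
              (huoff q (by omega)) (by omega)
          · exact hmne 1 (q + 2) s (u (ℓ - 3 - q)) (by omega) (by omega) hsoff
              (huoff q (by omega)) (by omega)
          · exact hmne (p + 2) (q + 2) (u (ℓ - 3 - p)) (u (ℓ - 3 - q)) (by omega) (by omega)
              (huoff p (by omega)) (huoff q (by omega)) (by omega)
        intro p q hp hq h
        rcases Nat.lt_trichotomy p q with hlt | heq | hgt
        · exact absurd h (aux p q hp hq hlt)
        · exact heq
        · exact absurd h.symm (aux q p hq hp hgt)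
      · -- consecutive adjacency
        intro p hp
        rcases p with _ | _ | _ | p
        · exact hax
        · exact hxs
        · show G.Adj s (u (ℓ - 3 - 0))
          rw [Nat.sub_zero]
          exact hTs.symm
        · show G.Adj (u (ℓ - 3 - p)) (u (ℓ - 3 - (p + 1)))
          rw [show ℓ - 3 - p = (ℓ - 3 - (p + 1)) + 1 by omega]
          exact (hua (ℓ - 3 - (p + 1))).symm
      · -- wrap
        rw [show ℓ + 1 - 1 = (ℓ - 3) + 3 by omega]
        show G.Adj (u (ℓ - 3 - (ℓ - 3))) a
        rw [Nat.sub_self, hu0]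
        exact haz.symm
      · -- non-adjacency
        intro p q hp hq hpq hne2
        rcases p with _ | _ | _ | p <;> rcases q with _ | _ | _ | q <;> try omega
        · -- a vs chain
          have hq3 : q + 3 ≠ ℓ := fun h => hne2 ⟨rfl, by omega⟩
          exact hmaster 0 (q + 2) a (u (ℓ - 3 - q)) (by omega) (by omega) haoff
            (huoff q (by omega)) (by omega)
            (by rw [Nat.mod_eq_of_lt (by omega)]; omega)
            (by rw [Nat.mod_eq_of_lt (by omega)]; omega)
        · -- x vs chain
          rcases q with _ | q
          · show ¬ G.Adj x (u (ℓ - 3 - 0))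
            rw [Nat.sub_zero]
            exact fun h => hxT h.symm
          · exact hmaster 1 (q + 3) x (u (ℓ - 3 - (q + 1))) (by omega) (by omega) hxoff
              (huoff (q + 1) (by omega)) (by omega)
              (by rw [Nat.mod_eq_of_lt (by omega)]; omega)
              (hmodne 1 (q + 4) (by omega) (by omega) (by omega))
        · -- s vs chain
          exact hmaster 1 (q + 2) s (u (ℓ - 3 - q)) (by omega) (by omega) hsoff
            (huoff q (by omega)) (by omega)
            (by rw [Nat.mod_eq_of_lt (by omega)]; omega)
            (hmodne 1 (q + 3) (by omega) (by omega) (by omega))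
        · -- chain vs chain
          exact hmaster (p + 2) (q + 2) (u (ℓ - 3 - p)) (u (ℓ - 3 - q)) (by omega) (by omega)
            (huoff p (by omega)) (huoff q (by omega)) (by omega)
            (by rw [Nat.mod_eq_of_lt (by omega)]; omega)
            (hmodne (p + 2) (q + 3) (by omega) (by omega) (by omega))
    apply hpan
    refine ⟨ℓ + 1, _, b, hole3, ?_, ?_⟩
    · rintro ⟨j, hj⟩
      have hjv : j.val < ℓ + 1 := ZMod.val_lt j
      have hj' : (fun m => match m with
          | 0 => a | 1 => x | 2 => s | (m + 3) => u (ℓ - 3 - m)) j.val = b := hj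
      generalize hg : j.val = m at hj' hjv
      match m with
      | 0 => exact hab_ne hj'
      | 1 => exact hmne 1 0 x b (by omega) (by omega) hxoff hboff (by omega) hj'
      | 2 => exact hmne 1 0 s b (by omega) (by omega) hsoff hboff (by omega) hj'
      | (m + 3) =>
        exact hmne (m + 2) 0 (u (ℓ - 3 - m)) b (by omega) (by omega)
          (huoff m (by omega)) hboff (by omega) hj'
    · refine ⟨0, ?_, ?_⟩
      · show G.Adj b ((fun m => match m with
          | 0 => a | 1 => x | 2 => s | (m + 3) => u (ℓ - 3 - m)) (0 : ZMod (ℓ + 1)).val)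
        rw [ZMod.val_zero]
        exact hab.symm
      · intro j hj
        have hjv : j.val < ℓ + 1 := ZMod.val_lt j
        have hj' : G.Adj b ((fun m => match m with
          | 0 => a | 1 => x | 2 => s | (m + 3) => u (ℓ - 3 - m)) j.val) := hj
        have hj0 : j.val = 0 := by
          generalize hg : j.val = m at hj' hjv
          match m with
          | 0 => rfl
          | 1 => exact absurd hj' hbx
          | 2 => exact absurd hj' hbs
          | (m + 3) =>
            exfalso
            by_cases hmz : m = ℓ - 3
            · apply hbz
              have hj2 : G.Adj b (u (ℓ - 3 - m)) := hj'
              rw [hmz, Nat.sub_self, hu0] at hj2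
              exact hj2
            · exact hmaster 0 (m + 2) b (u (ℓ - 3 - m)) (by omega) (by omega)
                hboff (huoff m (by omega)) (by omega)
                (by rw [Nat.mod_eq_of_lt (by omega)]; omega)
                (by rw [Nat.mod_eq_of_lt (by omega)]; omega) hj'
        exact (ZMod.val_eq_zero j).mp hj0
  case pos =>
    by_cases hbs : G.Adj b s
    case neg => exact panb s hsoff has hTs hbs
    case pos =>
      have hxs_ne : s ≠ x := by rintro rfl; exact hbx hbs
      have hxs : G.Adj x s := (hclique (i + 1)) hxB hsB (Ne.symm hxs_ne)
      by_cases hwu1 : G.Adj w (u 1)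
      · -- Case 3c-ii : hole b,s,T,...,u 1,w of length ℓ ; pan from x
        have holeb : IsHole G ℓ (fun j : ZMod ℓ =>
            (fun m => match m with
              | 0 => b | 1 => s
              | (m + 2) => if m + 2 = ℓ - 1 then w else u (ℓ - 3 - m)) j.val) := by
          refine hole_of_bags (fun m => match m with
            | 0 => b | 1 => s
            | (m + 2) => if m + 2 = ℓ - 1 then w else u (ℓ - 3 - m)) ?_ ?_ ?_
          · intro m hm
            match m with
            | 0 => exact hboff
            | 1 => exact hsoff
            | (m + 2) =>
              show (if m + 2 = ℓ - 1 then w else u (ℓ - 3 - m)) ∈ B (i + ((m + 2 : ℕ) : ZMod ℓ))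
              by_cases h : m + 2 = ℓ - 1
              · rw [if_pos h, h]; exact hwoff
              · rw [if_neg h]; exact huoff m (by omega)
          · intro m hm
            match m with
            | 0 => exact hbs
            | 1 =>
              show G.Adj s (if 2 = ℓ - 1 then w else u (ℓ - 3 - 0))
              rw [if_neg (by omega), Nat.sub_zero]
              exact hTs.symm
            | (m + 2) =>
              show G.Adj (if m + 2 = ℓ - 1 then w else u (ℓ - 3 - m))
                (if m + 3 = ℓ - 1 then w else u (ℓ - 3 - (m + 1)))
              rw [if_neg (by omega : ¬ (m + 2 = ℓ - 1))]
              by_cases h : m + 3 = ℓ - 1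
              · rw [if_pos h, show ℓ - 3 - m = 1 by omega]
                exact hwu1.symm
              · rw [if_neg h, show ℓ - 3 - m = (ℓ - 3 - (m + 1)) + 1 by omega]
                exact (hua (ℓ - 3 - (m + 1))).symm
          · obtain ⟨m, hm⟩ : ∃ m, ℓ - 1 = m + 2 := ⟨ℓ - 3, by omega⟩
            rw [hm]
            show G.Adj (if m + 2 = m + 2 then w else u (ℓ - 3 - m)) b
            rw [if_pos rfl]
            exact hbw.symm
        apply hpan
        refine ⟨ℓ, _, x, holeb, ?_, ?_⟩
        · rintro ⟨j, hj⟩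
          have hjv : j.val < ℓ := ZMod.val_lt j
          have hj' : (fun m => match m with
            | 0 => b | 1 => s
            | (m + 2) => if m + 2 = ℓ - 1 then w else u (ℓ - 3 - m)) j.val = x := hj
          generalize hg : j.val = m at hj' hjv
          match m with
          | 0 => exact hmne 0 1 b x (by omega) (by omega) hboff hxoff (by omega) hj'
          | 1 => exact hxs_ne hj'
          | (m + 2) =>
            have hj2 : (if m + 2 = ℓ - 1 then w else u (ℓ - 3 - m)) = x := hj'
            by_cases h : m + 2 = ℓ - 1
            · rw [if_pos h] at hj2
              exact hmne (ℓ - 1) 1 w x (by omega) (by omega) hwoff hxoff (by omega) hj2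
            · rw [if_neg h] at hj2
              exact hmne (m + 2) 1 (u (ℓ - 3 - m)) x (by omega) (by omega)
                (huoff m (by omega)) hxoff (by omega) hj2
        · haveI : Fact (1 < ℓ) := ⟨by omega⟩
          refine ⟨1, ?_, ?_⟩
          · show G.Adj x ((fun m => match m with
              | 0 => b | 1 => s
              | (m + 2) => if m + 2 = ℓ - 1 then w else u (ℓ - 3 - m)) (1 : ZMod ℓ).val)
            rw [ZMod.val_one]
            exact hxs
          · intro j hj
            have hjv : j.val < ℓ := ZMod.val_lt j
            have hj' : G.Adj x ((fun m => match m with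
              | 0 => b | 1 => s
              | (m + 2) => if m + 2 = ℓ - 1 then w else u (ℓ - 3 - m)) j.val) := hj
            have hj1 : j.val = 1 := by
              generalize hg : j.val = m at hj' hjv
              match m with
              | 0 => exact absurd hj'.symm hbx
              | 1 => rfl
              | (m + 2) =>
                exfalso
                have hj2 : G.Adj x (if m + 2 = ℓ - 1 then w else u (ℓ - 3 - m)) := hj'
                by_cases h : m + 2 = ℓ - 1
                · rw [if_pos h] at hj2
                  exact hmaster 1 (ℓ - 1) x w (by omega) (by omega) hxoff hwoff
                    (by omega) (by rw [Nat.mod_eq_of_lt (by omega)]; omega)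
                    (by rw [show ℓ - 1 + 1 = ℓ by omega, Nat.mod_self]; omega) hj2
                · rw [if_neg h] at hj2
                  rcases m with _ | m
                  · rw [Nat.sub_zero] at hj2
                    exact hxT hj2.symm
                  · exact hmaster 1 (m + 3) x (u (ℓ - 3 - (m + 1))) (by omega) (by omega)
                      hxoff (huoff (m + 1) (by omega)) (by omega)
                      (by rw [Nat.mod_eq_of_lt (by omega)]; omega)
                      (hmodne 1 (m + 4) (by omega) (by omega) (by omega)) hj2
            apply ZMod.val_injective
            rw [hj1, ZMod.val_one]
      · -- Case 3c-i : two holes of consecutive lengths, one is even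
        have hole2 : IsHole G (ℓ + 1) (fun j : ZMod (ℓ + 1) =>
            (fun m => match m with
              | 0 => b | 1 => s
              | (m + 2) => if m + 2 = ℓ then w else u (ℓ - 3 - m)) j.val) := by
          apply isHole_of_nat G (ℓ + 1) (by omega)
            (fun m => match m with
              | 0 => b | 1 => s
              | (m + 2) => if m + 2 = ℓ then w else u (ℓ - 3 - m))
          · -- injectivity
            have aux : ∀ p q, p < ℓ + 1 → q < ℓ + 1 → p < q →
                (fun m => match m with
                  | 0 => b | 1 => s
                  | (m + 2) => if m + 2 = ℓ then w else u (ℓ - 3 - m)) p ≠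
                (fun m => match m with
                  | 0 => b | 1 => s
                  | (m + 2) => if m + 2 = ℓ then w else u (ℓ - 3 - m)) q := by
              intro p q hp hq hlt
              rcases p with _ | _ | p <;> rcases q with _ | _ | q <;> try omega
              · exact hmne 0 1 b s (by omega) (by omega) hboff hsoff (by omega)
              · show b ≠ (if q + 2 = ℓ then w else u (ℓ - 3 - q))
                by_cases h : q + 2 = ℓ
                · rw [if_pos h]
                  exact hmne 0 (ℓ - 1) b w (by omega) (by omega) hboff hwoff (by omega)
                · rw [if_neg h]
                  exact hmne 0 (q + 2) b (u (ℓ - 3 - q)) (by omega) (by omega) hboff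
                    (huoff q (by omega)) (by omega)
              · show s ≠ (if q + 2 = ℓ then w else u (ℓ - 3 - q))
                by_cases h : q + 2 = ℓ
                · rw [if_pos h]
                  exact hmne 1 (ℓ - 1) s w (by omega) (by omega) hsoff hwoff (by omega)
                · rw [if_neg h]
                  exact hmne 1 (q + 2) s (u (ℓ - 3 - q)) (by omega) (by omega) hsoff
                    (huoff q (by omega)) (by omega)
              · show (if p + 2 = ℓ then w else u (ℓ - 3 - p)) ≠
                  (if q + 2 = ℓ then w else u (ℓ - 3 - q))
                rw [if_neg (by omega : ¬ (p + 2 = ℓ))]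
                by_cases h : q + 2 = ℓ
                · rw [if_pos h]
                  by_cases h2 : p = ℓ - 3
                  · rw [h2, Nat.sub_self, hu0]
                    exact hwz_ne.symm
                  · exact hmne (p + 2) (ℓ - 1) (u (ℓ - 3 - p)) w (by omega) (by omega)
                      (huoff p (by omega)) hwoff (by omega)
                · rw [if_neg h]
                  exact hmne (p + 2) (q + 2) (u (ℓ - 3 - p)) (u (ℓ - 3 - q)) (by omega)
                    (by omega) (huoff p (by omega)) (huoff q (by omega)) (by omega)
            intro p q hp hq h
            rcases Nat.lt_trichotomy p q with hlt | heq | hgt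
            · exact absurd h (aux p q hp hq hlt)
            · exact heq
            · exact absurd h.symm (aux q p hq hp hgt)
          · -- consecutive adjacency
            intro p hp
            rcases p with _ | _ | p
            · exact hbs
            · show G.Adj s (if 2 = ℓ then w else u (ℓ - 3 - 0))
              rw [if_neg (by omega), Nat.sub_zero]
              exact hTs.symm
            · show G.Adj (if p + 2 = ℓ then w else u (ℓ - 3 - p))
                (if p + 3 = ℓ then w else u (ℓ - 3 - (p + 1)))
              rw [if_neg (by omega : ¬ (p + 2 = ℓ))]
              by_cases h : p + 3 = ℓ
              · rw [if_pos h, show ℓ - 3 - p = 0 by omega, hu0]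
                exact hwz.symm
              · rw [if_neg h, show ℓ - 3 - p = (ℓ - 3 - (p + 1)) + 1 by omega]
                exact (hua (ℓ - 3 - (p + 1))).symm
          · -- wrap
            rw [Nat.add_sub_cancel]
            obtain ⟨m, hm⟩ : ∃ m, ℓ = m + 2 := ⟨ℓ - 2, by omega⟩
            rw [hm]
            show G.Adj (if m + 2 = m + 2 then w else u (m + 2 - 3 - m)) b
            rw [if_pos rfl]
            exact hbw.symm
          · -- non-adjacency
            intro p q hp hq hpq hne2
            rcases p with _ | _ | p <;> rcases q with _ | _ | q <;> try omega
            · -- b vs rest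
              show ¬ G.Adj b (if q + 2 = ℓ then w else u (ℓ - 3 - q))
              by_cases h : q + 2 = ℓ
              · exact absurd ⟨rfl, by omega⟩ hne2
              · rw [if_neg h]
                by_cases h2 : q = ℓ - 3
                · rw [h2, Nat.sub_self, hu0]
                  exact hbz
                · exact hmaster 0 (q + 2) b (u (ℓ - 3 - q)) (by omega) (by omega) hboff
                    (huoff q (by omega)) (by omega)
                    (by rw [Nat.mod_eq_of_lt (by omega)]; omega)
                    (by rw [Nat.mod_eq_of_lt (by omega)]; omega)
            · -- s vs rest
              show ¬ G.Adj s (if q + 2 = ℓ then w else u (ℓ - 3 - q))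
              by_cases h : q + 2 = ℓ
              · rw [if_pos h]
                exact hmaster 1 (ℓ - 1) s w (by omega) (by omega) hsoff hwoff
                  (by omega) (by rw [Nat.mod_eq_of_lt (by omega)]; omega)
                  (by rw [show ℓ - 1 + 1 = ℓ by omega, Nat.mod_self]; omega)
              · rw [if_neg h]
                exact hmaster 1 (q + 2) s (u (ℓ - 3 - q)) (by omega) (by omega) hsoff
                  (huoff q (by omega)) (by omega)
                  (by rw [Nat.mod_eq_of_lt (by omega)]; omega)
                  (hmodne 1 (q + 3) (by omega) (by omega) (by omega))
            · -- chain vs rest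
              show ¬ G.Adj (if p + 2 = ℓ then w else u (ℓ - 3 - p))
                (if q + 2 = ℓ then w else u (ℓ - 3 - q))
              rw [if_neg (by omega : ¬ (p + 2 = ℓ))]
              by_cases h : q + 2 = ℓ
              · rw [if_pos h]
                by_cases h2 : p = ℓ - 4
                · rw [h2, show ℓ - 3 - (ℓ - 4) = 1 by omega]
                  exact fun hcon => hwu1 hcon.symm
                · exact hmaster (p + 2) (ℓ - 1) (u (ℓ - 3 - p)) w (by omega) (by omega)
                    (huoff p (by omega)) hwoff (by omega)
                    (by rw [Nat.mod_eq_of_lt (by omega)]; omega)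
                    (by rw [show ℓ - 1 + 1 = ℓ by omega, Nat.mod_self]; omega)
              · rw [if_neg h]
                exact hmaster (p + 2) (q + 2) (u (ℓ - 3 - p)) (u (ℓ - 3 - q)) (by omega)
                  (by omega) (huoff p (by omega)) (huoff q (by omega)) (by omega)
                  (by rw [Nat.mod_eq_of_lt (by omega)]; omega)
                  (hmodne (p + 2) (q + 3) (by omega) (by omega) (by omega))
        rcases Nat.even_or_odd ℓ with he | ho
        · exact heven ⟨ℓ, _, mkhole1 s hsoff has hTs, he⟩
        · exact heven ⟨ℓ + 1, _, hole2, ho.add_one⟩
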